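/- arXiv:2003.05791 — 4 statements merged into one kernel-verified Lean document; each statement's English description precedes it below -/
import Mathlib

section
/- Let p ≥ 5 be a prime and ζ a primitive p-th root of unity. Then λ = 2 + ζ + ζ^{-1} and μ = -1 - ζ - ζ^{-1} are units in Z[ζ] satisfying λ + μ = 1. In particular, the unit equation λ + μ = 1 has a solution in units of the ring of integers of Q(ζ_p). -/
open NumberField

/-- Let `p ≥ 5` be a prime and `ζ` a primitive `p`-th root of unity. Then
`λ = 2 + ζ + ζ⁻¹` and `μ = -1 - ζ - ζ⁻¹` are units in the ring of integers of
the `p`-th cyclotomic field `ℚ(ζ_p)` and they satisfy `λ + μ = 1`; in particular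
the unit equation has a solution in units of the ring of integers of `ℚ(ζ_p)`. -/
theorem unit_equation_has_solution_in_cyclotomic (p : ℕ+) (hp : (p : ℕ).Prime)
    (hp5 : 5 ≤ (p : ℕ)) (K : Type*) [Field K] [NumberField K] [IsCyclotomicExtension {(p : ℕ)} ℚ K]
    (ζ : K) (hζ : IsPrimitiveRoot ζ p) :
    (∃ u : (𝓞 K)ˣ, algebraMap (𝓞 K) K (u : 𝓞 K) = 2 + ζ + ζ⁻¹) ∧
    (∃ v : (𝓞 K)ˣ, algebraMap (𝓞 K) K (v : 𝓞 K) = -1 - ζ - ζ⁻¹) ∧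
    (2 + ζ + ζ⁻¹) + (-1 - ζ - ζ⁻¹) = 1 := by
  set n : ℕ := (p : ℕ) with hn
  have hz : IsPrimitiveRoot hζ.toInteger p := hζ.toInteger_isPrimitiveRoot
  set z : 𝓞 K := hζ.toInteger with hzdef
  have hzp : z ^ n = 1 := hz.pow_eq_one
  have hz1 : z ≠ 1 := hz.ne_one (by omega : 1 < n)
  have hzsub : z - 1 ≠ 0 := sub_ne_zero.mpr hz1
  -- p is odd
  obtain ⟨t, ht⟩ : Odd n := hp.odd_of_ne_two (by omega)
  set k : ℕ := (n + 1) / 2 with hk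
  have h2k : 2 * k = n + 1 := by omega
  -- 3 does not divide p
  have hp3 : n % 3 = 1 ∨ n % 3 = 2 := by
    have h0 : n % 3 ≠ 0 := by
      intro h
      rcases hp.eq_one_or_self_of_dvd 3 (Nat.dvd_of_mod_eq_zero h) with h3 | h3 <;> omega
    omega
  obtain ⟨m, q, hmq⟩ : ∃ m q : ℕ, 3 * m = q * n + 1 := by
    rcases hp3 with h | h
    · exact ⟨(2 * n + 1) / 3, 2, by omega⟩
    · exact ⟨(n + 1) / 3, 1, by omega⟩
  set S2 : 𝓞 K := ∑ i ∈ Finset.range k, (z ^ 2) ^ i with hS2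
  set S3 : 𝓞 K := ∑ i ∈ Finset.range m, (z ^ 3) ^ i with hS3
  have key2 : (1 + z) * S2 = 1 := by
    apply mul_right_cancel₀ hzsub
    calc (1 + z) * S2 * (z - 1) = S2 * (z ^ 2 - 1) := by ring
      _ = (z ^ 2) ^ k - 1 := geom_sum_mul _ _
      _ = z ^ (2 * k) - 1 := by rw [← pow_mul]
      _ = z ^ n * z - 1 := by rw [h2k, pow_succ]
      _ = 1 * (z - 1) := by rw [hzp]; ring
  have key3 : (1 + z + z ^ 2) * S3 = 1 := by
    apply mul_right_cancel₀ hzsub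
    calc (1 + z + z ^ 2) * S3 * (z - 1) = S3 * (z ^ 3 - 1) := by ring
      _ = (z ^ 3) ^ m - 1 := geom_sum_mul _ _
      _ = z ^ (3 * m) - 1 := by rw [← pow_mul]
      _ = (z ^ n) ^ q * z - 1 := by rw [hmq, pow_succ, mul_comm q n, pow_mul]
      _ = 1 * (z - 1) := by rw [hzp]; ring
  have hzn1 : z ^ (n - 1) * z = 1 := by
    rw [← pow_succ, show n - 1 + 1 = n by omega, hzp]
  -- the units
  have hu : (z ^ (n - 1) * (1 + z) ^ 2) * (z * S2 ^ 2) = 1 := by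
    calc (z ^ (n - 1) * (1 + z) ^ 2) * (z * S2 ^ 2)
        = (z ^ (n - 1) * z) * ((1 + z) * S2) ^ 2 := by ring
      _ = 1 := by rw [hzn1, key2]; ring
  have hv : (-(z ^ (n - 1) * (1 + z + z ^ 2))) * (-(z * S3)) = 1 := by
    calc (-(z ^ (n - 1) * (1 + z + z ^ 2))) * (-(z * S3))
        = (z ^ (n - 1) * z) * ((1 + z + z ^ 2) * S3) := by ring
      _ = 1 := by rw [hzn1, key3]; ring
  -- facts about ζ in K
  have hζp : ζ ^ n = 1 := hζ.pow_eq_one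
  have hζinv : ζ⁻¹ = ζ ^ (n - 1) := by
    refine inv_eq_of_mul_eq_one_right ?_
    rw [← pow_succ', show n - 1 + 1 = n by omega, hζp]
  have hζn1 : ζ ^ (n - 1) * ζ = 1 := by
    rw [← pow_succ, show n - 1 + 1 = n by omega, hζp]
  have hzcoe : algebraMap (𝓞 K) K z = ζ := rfl
  refine ⟨⟨Units.mkOfMulEqOne _ _ hu, ?_⟩, ⟨Units.mkOfMulEqOne _ _ hv, ?_⟩, by ring⟩
  · show algebraMap (𝓞 K) K (z ^ (n - 1) * (1 + z) ^ 2) = 2 + ζ + ζ⁻¹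
    simp only [map_mul, map_pow, map_add, map_one, hzcoe]
    rw [hζinv]
    calc ζ ^ (n - 1) * (1 + ζ) ^ 2
        = ζ ^ (n - 1) + 2 * (ζ ^ (n - 1) * ζ) + (ζ ^ (n - 1) * ζ) * ζ := by ring
      _ = 2 + ζ + ζ ^ (n - 1) := by rw [hζn1]; ring
  · show algebraMap (𝓞 K) K (-(z ^ (n - 1) * (1 + z + z ^ 2))) = -1 - ζ - ζ⁻¹
    simp only [map_neg, map_mul, map_pow, map_add, map_one, hzcoe]
    rw [hζinv]
    calc -(ζ ^ (n - 1) * (1 + ζ + ζ ^ 2))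
        = -(ζ ^ (n - 1) + (ζ ^ (n - 1) * ζ) + (ζ ^ (n - 1) * ζ) * ζ) := by ring
      _ = -1 - ζ - ζ ^ (n - 1) := by rw [hζn1]; ring
end

section
/- Let K/F be a Galois extension of number fields of degree (p-1)/2, where p is a rational prime totally ramified in K, and let 𝔭 be the unique prime of F above p. Then every ε in O_F^× that is a norm of some element of K^× satisfies ε ≡ ±1 (mod 𝔭). -/
open NumberField

/-- In a nontrivial ring where a prime `p` vanishes, no positive natural
number smaller than `p` vanishes. -/
lemma aux_natCast_ne_zero {R : Type*} [CommRing R] [Nontrivial R] {p : ℕ} (hp : p.Prime)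
    (hpR : (p : R) = 0) {d : ℕ} (hd : 0 < d) (hdp : d < p) : (d : R) ≠ 0 := by
  intro h0
  have hcop : Nat.Coprime p d := (Nat.Prime.coprime_iff_not_dvd hp).mpr
    (fun hdvd => absurd (Nat.le_of_dvd hd hdvd) (not_le.mpr hdp))
  have hic : IsCoprime (p : ℤ) (d : ℤ) := Nat.isCoprime_iff_coprime.mpr hcop
  obtain ⟨a, b, hab⟩ := hic
  have := congrArg (fun z : ℤ => (z : R)) hab
  simp only [Int.cast_add, Int.cast_mul, Int.cast_natCast, Int.cast_one, hpR, h0,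
    mul_zero, add_zero] at this
  exact one_ne_zero this.symm

set_option maxHeartbeats 1000000 in
set_option synthInstance.maxHeartbeats 400000 in
/-- Let `K/F` be a Galois extension of number fields of degree `(p-1)/2`, where `p` is a
rational prime totally ramified in `K` (i.e. `p·O_K = 𝔓^[K:ℚ]` for a (necessarily unique)
maximal ideal `𝔓` of `O_K`), and let `𝔭` be the (unique) prime of `F` above `p`. Then every
`ε ∈ O_F^×` which is the norm of some element of `K^×` satisfies `ε ≡ ±1 (mod 𝔭)`. -/
theorem norm_unit_eq_pm_one_mod_p (F K : Type*) [Field F] [NumberField F]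
    [Field K] [NumberField K] [Algebra F K] [IsGalois F K]
    (p : ℕ) (hp : p.Prime) (hdeg : Module.finrank F K = (p - 1) / 2)
    (htot : ∃ 𝔓 : Ideal (𝓞 K), 𝔓.IsMaximal ∧
      Ideal.span {(p : 𝓞 K)} = 𝔓 ^ Module.finrank ℚ K)
    (𝔭 : Ideal (𝓞 F)) (h𝔭 : 𝔭.IsMaximal) (hp𝔭 : (p : 𝓞 F) ∈ 𝔭)
    (ε : (𝓞 F)ˣ) (hε : ∃ η : K, η ≠ 0 ∧ Algebra.norm F η = algebraMap (𝓞 F) F (ε : 𝓞 F)) :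
    (ε : 𝓞 F) - 1 ∈ 𝔭 ∨ (ε : 𝓞 F) + 1 ∈ 𝔭 := by
  classical
  obtain ⟨𝔓, h𝔓max, h𝔓⟩ := htot
  obtain ⟨η, hη0, hηnorm⟩ := hε
  haveI : IsScalarTower ℚ F K := IsScalarTower.of_algebraMap_eq' (Subsingleton.elim _ _)
  haveI : FiniteDimensional F K := Module.Finite.right ℚ F K
  set m := Module.finrank F K with hm
  set n := Module.finrank ℚ K with hn
  have hm1 : 1 ≤ m := Module.finrank_pos
  have hn1 : 1 ≤ n := Module.finrank_pos
  have hpodd : p % 2 = 1 := by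
    rcases hp.eq_two_or_odd with h | h
    · omega
    · exact h
  have h2m : 2 * m = p - 1 := by omega
  have hp3 : 3 ≤ p := by omega
  -- p belongs to 𝔓
  have hp𝔓 : (p : 𝓞 K) ∈ 𝔓 := by
    have h1 : Ideal.span {(p : 𝓞 K)} ≤ 𝔓 := by
      rw [h𝔓]; exact Ideal.pow_le_self (by omega)
    exact h1 (Ideal.mem_span_singleton_self _)
  -- uniqueness of the prime over p
  have huniq : ∀ Q : Ideal (𝓞 K), Q.IsPrime → (p : 𝓞 K) ∈ Q → Q = 𝔓 := by
    intro Q hQ hpQ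
    have h1 : 𝔓 ^ n ≤ Q := by
      rw [← h𝔓, Ideal.span_le]
      simpa using hpQ
    have h2 : 𝔓 ≤ Q := hQ.le_of_pow_le h1
    exact (h𝔓max.eq_of_le hQ.ne_top h2).symm
  have hpK0 : (p : 𝓞 K) ≠ 0 := Nat.cast_ne_zero.mpr hp.ne_zero
  have h𝔓bot : 𝔓 ≠ ⊥ := by
    intro h
    rw [h] at hp𝔓
    exact hpK0 (Ideal.mem_bot.mp hp𝔓)
  -- the residue field has cardinality p
  have habs : Ideal.absNorm 𝔓 = p := by
    have h1 : Ideal.absNorm (Ideal.span {(p : 𝓞 K)}) = p ^ n := by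
      rw [Ideal.absNorm_span_singleton]
      have h2 : Algebra.norm ℤ ((p : ℕ) : 𝓞 K) = ((p : ℕ) ^ n : ℤ) := by
        have h3 : ((Algebra.norm ℤ ((p : ℕ) : 𝓞 K) : ℤ) : ℚ) = (((p : ℕ) ^ n : ℤ) : ℚ) := by
          rw [Algebra.coe_norm_int]
          have h4 : (((p : ℕ) : 𝓞 K) : K) = algebraMap ℚ K ((p : ℕ) : ℚ) := by
            push_cast
            simp
          rw [h4, Algebra.norm_algebraMap]
          push_cast
          ring
        exact_mod_cast h3
      rw [h2]
      simp [Int.natAbs_pow]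
    rw [h𝔓, map_pow] at h1
    exact Nat.pow_left_injective (by omega) h1
  letI : Field (𝓞 K ⧸ 𝔓) := Ideal.Quotient.field 𝔓
  have hcardQ : Nat.card (𝓞 K ⧸ 𝔓) = p := by
    rw [← habs, Ideal.absNorm_apply, Submodule.cardQuot_apply]
  haveI : Finite (𝓞 K ⧸ 𝔓) := Nat.finite_of_card_ne_zero (by rw [hcardQ]; exact hp.ne_zero)
  letI : Fintype (𝓞 K ⧸ 𝔓) := Fintype.ofFinite _
  have hcard : Fintype.card (𝓞 K ⧸ 𝔓) = p := by rw [← Nat.card_eq_fintype_card, hcardQ]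
  have hpQ0 : ((p : ℕ) : 𝓞 K ⧸ 𝔓) = 0 := by
    have : ((p : ℕ) : 𝓞 K ⧸ 𝔓) = Ideal.Quotient.mk 𝔓 ((p : ℕ) : 𝓞 K) := by
      rw [map_natCast]
    rw [this, Ideal.Quotient.eq_zero_iff_mem]
    exact hp𝔓
  -- every residue class is a natural number
  have hnatcast : ∀ x : 𝓞 K ⧸ 𝔓, ∃ c : ℕ, (c : 𝓞 K ⧸ 𝔓) = x := by
    have hinj : Function.Injective (fun i : Fin p => ((i : ℕ) : 𝓞 K ⧸ 𝔓)) := by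
      intro i j hij
      simp only at hij
      by_contra hne
      have hne' : (i : ℕ) ≠ (j : ℕ) := fun h => hne (Fin.ext h)
      have hip := i.isLt
      have hjp := j.isLt
      rcases Nat.lt_or_ge (i : ℕ) (j : ℕ) with hlt | hge
      · refine aux_natCast_ne_zero hp hpQ0 (d := (j : ℕ) - (i : ℕ)) (by omega) (by omega) ?_
        push_cast [Nat.cast_sub hlt.le]
        rw [← hij]; ring
      · have hlt : (j : ℕ) < (i : ℕ) := by omega
        refine aux_natCast_ne_zero hp hpQ0 (d := (i : ℕ) - (j : ℕ)) (by omega) (by omega) ?_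
        push_cast [Nat.cast_sub hlt.le]
        rw [hij]; ring
    have hbij : Function.Bijective (fun i : Fin p => ((i : ℕ) : 𝓞 K ⧸ 𝔓)) :=
      (Fintype.bijective_iff_injective_and_card _).mpr ⟨hinj, by simp [hcard]⟩
    intro x
    obtain ⟨i, hi⟩ := hbij.surjective x
    exact ⟨(i : ℕ), hi⟩
  -- the Galois action is trivial on the residue field
  have hgal : ∀ (σ : K ≃ₐ[F] K) (x : 𝓞 K),
      Ideal.Quotient.mk 𝔓 (galRestrict (𝓞 F) F K (𝓞 K) σ x) = Ideal.Quotient.mk 𝔓 x := by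
    intro σ x
    set σ' := galRestrict (𝓞 F) F K (𝓞 K) σ with hσ'
    have hfix : ∀ y : 𝓞 K, y ∈ 𝔓 → σ' y ∈ 𝔓 := by
      intro y hy
      have hQ : (𝔓.comap (σ' : 𝓞 K →+* 𝓞 K)) = 𝔓 := by
        apply huniq
        · exact Ideal.IsPrime.comap _
        · rw [Ideal.mem_comap]
          simpa using hp𝔓
      rw [← hQ] at hy
      exact hy
    obtain ⟨c, hc⟩ := hnatcast (Ideal.Quotient.mk 𝔓 x)
    have hxc : x - (c : 𝓞 K) ∈ 𝔓 := by
      rw [← Ideal.Quotient.eq_zero_iff_mem, map_sub, map_natCast, hc, sub_self]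
    have h2 : σ' x - (c : 𝓞 K) ∈ 𝔓 := by
      have h3 := hfix _ hxc
      rw [map_sub, map_natCast] at h3
      exact h3
    calc Ideal.Quotient.mk 𝔓 (σ' x) = ((c : ℕ) : 𝓞 K ⧸ 𝔓) := by
          rw [← map_natCast (Ideal.Quotient.mk 𝔓)]
          exact Ideal.Quotient.eq.mpr h2
      _ = Ideal.Quotient.mk 𝔓 x := hc
  -- the norm reduces to the m-th power map on the residue field
  have hnormprod : ∀ a : 𝓞 K,
      Ideal.Quotient.mk 𝔓 (algebraMap (𝓞 F) (𝓞 K) (RingOfIntegers.norm F a)) =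
        (Ideal.Quotient.mk 𝔓 a) ^ m := by
    intro a
    have h1 : algebraMap (𝓞 F) (𝓞 K) (RingOfIntegers.norm F a) =
        ∏ σ : K ≃ₐ[F] K, galRestrict (𝓞 F) F K (𝓞 K) σ a := by
      apply RingOfIntegers.coe_injective
      rw [map_prod]
      have h2 : (algebraMap (𝓞 K) K) (algebraMap (𝓞 F) (𝓞 K) (RingOfIntegers.norm F a)) =
          algebraMap F K (Algebra.norm F (algebraMap (𝓞 K) K a)) :=
        RingOfIntegers.coe_algebraMap_norm F a
      rw [h2, Algebra.norm_eq_prod_automorphisms]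
      exact Finset.prod_congr rfl fun σ _ => (algebraMap_galRestrict_apply _ σ a).symm
    rw [h1, map_prod]
    calc (∏ σ : K ≃ₐ[F] K, Ideal.Quotient.mk 𝔓 (galRestrict (𝓞 F) F K (𝓞 K) σ a))
        = ∏ _σ : K ≃ₐ[F] K, Ideal.Quotient.mk 𝔓 a := Finset.prod_congr rfl fun σ _ => hgal σ a
      _ = (Ideal.Quotient.mk 𝔓 a) ^ m := by
          rw [Finset.prod_const, Finset.card_univ, ← Nat.card_eq_fintype_card, IsGalois.card_aut_eq_finrank]
  -- 𝔭 is the contraction of 𝔓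
  have hψinj : Function.Injective (algebraMap (𝓞 F) (𝓞 K)) := by
    intro x y hxy
    apply RingOfIntegers.coe_injective (K := F)
    apply (algebraMap F K).injective
    have := congrArg (algebraMap (𝓞 K) K) hxy
    rwa [← IsScalarTower.algebraMap_apply, ← IsScalarTower.algebraMap_apply,
      IsScalarTower.algebraMap_apply (𝓞 F) F K, IsScalarTower.algebraMap_apply (𝓞 F) F K] at this
  have hcomap : 𝔭 = Ideal.comap (algebraMap (𝓞 F) (𝓞 K)) 𝔓 := by
    haveI : Algebra.IsIntegral (𝓞 F) (𝓞 K) := by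
      constructor
      intro x
      exact IsIntegral.tower_top (R := ℤ) (Algebra.IsIntegral.isIntegral x)
    obtain ⟨Q, -, hQprime, hQcomap⟩ := Ideal.exists_ideal_over_prime_of_isIntegral 𝔭 (⊥ : Ideal (𝓞 K)) (by
      intro x hx
      rw [Ideal.mem_comap, Ideal.mem_bot] at hx
      have : x = 0 := hψinj (by simpa using hx)
      rw [this]; exact 𝔭.zero_mem)
    have hpQ : (p : 𝓞 K) ∈ Q := by
      have : (p : 𝓞 F) ∈ Ideal.comap (algebraMap (𝓞 F) (𝓞 K)) Q := by rw [hQcomap]; exact hp𝔭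
      rw [Ideal.mem_comap, map_natCast] at this
      exact this
    rw [← hQcomap, huniq Q hQprime hpQ]
  -- units of 𝓞 F are nonzero in the residue field
  have hεne : ∀ ε' : (𝓞 F)ˣ,
      Ideal.Quotient.mk 𝔓 (algebraMap (𝓞 F) (𝓞 K) (ε' : 𝓞 F)) ≠ 0 := by
    intro ε' h0
    rw [Ideal.Quotient.eq_zero_iff_mem] at h0
    have : IsUnit (algebraMap (𝓞 F) (𝓞 K) (ε' : 𝓞 F)) := ε'.isUnit.map _
    exact h𝔓max.ne_top (Ideal.eq_top_of_isUnit_mem _ h0 this)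
  -- key step
  have key : ∀ (ε' : (𝓞 F)ˣ) (η' : K), Algebra.norm F η' = algebraMap (𝓞 F) F (ε' : 𝓞 F) →
      (∃ a b : 𝓞 K, b ∉ 𝔓 ∧ η' * algebraMap (𝓞 K) K b = algebraMap (𝓞 K) K a) →
      (ε' : 𝓞 F) ^ 2 - 1 ∈ 𝔭 := by
    rintro ε' η' hnorm ⟨a, b, hb, hab⟩
    have hNab : RingOfIntegers.norm F a = (ε' : 𝓞 F) * RingOfIntegers.norm F b := by
      apply RingOfIntegers.coe_injective
      have ha : (algebraMap (𝓞 F) F) (RingOfIntegers.norm F a) =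
          Algebra.norm F (algebraMap (𝓞 K) K a) := RingOfIntegers.coe_norm F a
      have hbn : (algebraMap (𝓞 F) F) (RingOfIntegers.norm F b) =
          Algebra.norm F (algebraMap (𝓞 K) K b) := RingOfIntegers.coe_norm F b
      rw [map_mul, ha, hbn, ← hab, map_mul, hnorm]
    have h1 : (Ideal.Quotient.mk 𝔓 a) ^ m =
        Ideal.Quotient.mk 𝔓 (algebraMap (𝓞 F) (𝓞 K) (ε' : 𝓞 F)) *
          (Ideal.Quotient.mk 𝔓 b) ^ m := by
      rw [← hnormprod a, hNab, map_mul, map_mul, hnormprod b]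
    set xa := Ideal.Quotient.mk 𝔓 a with hxa'
    set xb := Ideal.Quotient.mk 𝔓 b with hxb'
    set xe := Ideal.Quotient.mk 𝔓 (algebraMap (𝓞 F) (𝓞 K) (ε' : 𝓞 F)) with hxe'
    have hxb : xb ≠ 0 := by
      rw [hxb', Ne, Ideal.Quotient.eq_zero_iff_mem]
      exact hb
    have hxe : xe ≠ 0 := hεne ε'
    have hceq : (xa / xb) ^ m = xe := by
      rw [div_pow, h1]
      field_simp
    have hc0 : xa / xb ≠ 0 := by
      intro h
      rw [h, zero_pow (by omega)] at hceq
      exact hxe hceq.symm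
    have hxe2 : xe ^ 2 = 1 := by
      rw [← hceq, ← pow_mul]
      have : m * 2 = Fintype.card (𝓞 K ⧸ 𝔓) - 1 := by rw [hcard]; omega
      rw [this]
      exact FiniteField.pow_card_sub_one_eq_one _ hc0
    have hmem : algebraMap (𝓞 F) (𝓞 K) ((ε' : 𝓞 F) ^ 2 - 1) ∈ 𝔓 := by
      rw [← Ideal.Quotient.eq_zero_iff_mem]
      simp only [map_sub, map_pow, map_one]
      rw [← hxe', hxe2, sub_self]
    rw [hcomap]
    exact hmem
  -- obtain an integral representation of η or of η⁻¹ with denominator prime to 𝔓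
  have hrep : (∃ a b : 𝓞 K, b ∉ 𝔓 ∧ η * algebraMap (𝓞 K) K b = algebraMap (𝓞 K) K a) ∨
      (∃ a b : 𝓞 K, b ∉ 𝔓 ∧ η⁻¹ * algebraMap (𝓞 K) K b = algebraMap (𝓞 K) K a) := by
    have hS : 𝔓.primeCompl ≤ nonZeroDivisors (𝓞 K) := 𝔓.primeCompl_le_nonZeroDivisors
    set A := Localization.subalgebra K 𝔓.primeCompl hS with hA
    haveI : IsLocalization.AtPrime A 𝔓 :=
      Localization.subalgebra.isLocalization_subalgebra K 𝔓.primeCompl hS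
    haveI : IsDiscreteValuationRing A :=
      IsLocalization.AtPrime.isDiscreteValuationRing_of_dedekind_domain (𝓞 K) h𝔓bot A
    have hrep' : ∀ ζ : K, IsLocalization.IsInteger A ζ →
        ∃ a b : 𝓞 K, b ∉ 𝔓 ∧ ζ * algebraMap (𝓞 K) K b = algebraMap (𝓞 K) K a := by
      rintro ζ ⟨r, hr⟩
      obtain ⟨⟨a, s⟩, hs⟩ := IsLocalization.surj 𝔓.primeCompl r
      refine ⟨a, s, s.2, ?_⟩
      have := congrArg (algebraMap A K) hs
      rw [map_mul, ← IsScalarTower.algebraMap_apply, ← IsScalarTower.algebraMap_apply] at this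
      rw [hr] at this
      exact this
    rcases ValuationRing.isInteger_or_isInteger A η with h | h
    · exact Or.inl (hrep' η h)
    · exact Or.inr (hrep' η⁻¹ h)
  -- conclude that ε² ≡ 1 (mod 𝔭)
  have hε2 : (ε : 𝓞 F) ^ 2 - 1 ∈ 𝔭 := by
    rcases hrep with h | h
    · exact key ε η hηnorm h
    · have hinvnorm : Algebra.norm F η⁻¹ = algebraMap (𝓞 F) F ((ε⁻¹ : (𝓞 F)ˣ) : 𝓞 F) := by
        have h1 : Algebra.norm F η⁻¹ * Algebra.norm F η = 1 := by
          rw [← map_mul, inv_mul_cancel₀ hη0, map_one]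
        have h2 : algebraMap (𝓞 F) F ((ε⁻¹ : (𝓞 F)ˣ) : 𝓞 F) * Algebra.norm F η = 1 := by
          rw [hηnorm, ← map_mul, Units.inv_mul, map_one]
        have h3 : Algebra.norm F η ≠ 0 := by
          intro h0
          rw [h0, mul_zero] at h1
          exact zero_ne_one h1
        exact mul_right_cancel₀ h3 (h1.trans h2.symm)
      have h1 := key ε⁻¹ η⁻¹ hinvnorm h
      have h2 : ((ε : 𝓞 F)) ^ 2 * (((ε⁻¹ : (𝓞 F)ˣ) : 𝓞 F) ^ 2 - 1) ∈ 𝔭 :=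
        Ideal.mul_mem_left _ _ h1
      have h3 : ((ε : 𝓞 F)) ^ 2 * (((ε⁻¹ : (𝓞 F)ˣ) : 𝓞 F) ^ 2 - 1) = -((ε : 𝓞 F) ^ 2 - 1) := by
        have h4 : (ε : 𝓞 F) * ((ε⁻¹ : (𝓞 F)ˣ) : 𝓞 F) = 1 := Units.mul_inv ε
        rw [mul_sub, ← mul_pow, h4, one_pow, mul_one]
        ring
      rw [h3] at h2
      have h5 := 𝔭.neg_mem h2
      simpa using h5
  have hfact : ((ε : 𝓞 F) - 1) * ((ε : 𝓞 F) + 1) ∈ 𝔭 := by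
    have : ((ε : 𝓞 F) - 1) * ((ε : 𝓞 F) + 1) = (ε : 𝓞 F) ^ 2 - 1 := by ring
    rw [this]
    exact hε2
  exact h𝔭.isPrime.mem_or_mem hfact
end

section
/- Let F be a number field, 𝔮 the prime of F above 2 with 2 inert in F (so 𝔮 = 2O_F), and S = {𝔮}. Suppose (λ, μ) solves the S-unit equation λ + μ = 1 with λ ∈ O_F, ord_𝔮(λ) = n ≥ 2, ord_𝔮(μ) = 0, and μ = δ² for some unit δ ∈ O_F^×. Set λ₁ = 1 + δ and λ₂ = 1 - δ. Then λ₁λ₂ = λ, λ₁ + λ₂ = 2, λ₁ - λ₂ = 2δ, both λ₁, λ₂ are S-units with nonnegative 𝔮-valuation, and one of ord_𝔮(λ₁), ord_𝔮(λ₂) equals 1 while the other equals n - 1. -/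
open NumberField IsDedekindDomain

/-- The additive `𝔮`-adic valuation `ord_𝔮(x) ∈ ℤ` of a nonzero element `x` of a number
field `F`, at the height-one prime `𝔮` of `O_F` (junk value `0` at `x = 0`). -/
noncomputable def ordAt {F : Type*} [Field F] [NumberField F]
    (v : HeightOneSpectrum (𝓞 F)) (x : F) : ℤ :=
  if h : v.valuation F x = 0 then 0 else -Multiplicative.toAdd (WithZero.unzero h)

open Multiplicative in
private lemma ordAt_spec {F : Type*} [Field F] [NumberField F]
    (v : HeightOneSpectrum (𝓞 F)) {x : F} (h : v.valuation F x ≠ 0) :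
    v.valuation F x = ((Multiplicative.ofAdd (-ordAt v x) : Multiplicative ℤ) :
      WithZero (Multiplicative ℤ)) := by
  rw [ordAt, dif_neg h, neg_neg, ofAdd_toAdd, WithZero.coe_unzero]


/-- Let `F` be a number field, `𝔮 = 2O_F` the prime of `F` above `2` with `2` inert in `F`,
and `S = {𝔮}`. Suppose `(λ, μ)` solves the `S`-unit equation `λ + μ = 1` with `λ ∈ O_F`,
`ord_𝔮(λ) = n ≥ 2`, `ord_𝔮(μ) = 0`, and `μ = δ²` for a unit `δ ∈ O_F^×`. Set `λ₁ = 1 + δ`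
and `λ₂ = 1 - δ`. Then `λ₁λ₂ = λ`, `λ₁ + λ₂ = 2`, `λ₁ - λ₂ = 2δ`, both `λ₁, λ₂` are
`S`-units with nonnegative `𝔮`-valuation, and one of `ord_𝔮(λ₁)`, `ord_𝔮(λ₂)` equals `1`
while the other equals `n - 1`. -/
theorem sunit_descent_factors (F : Type*) [Field F] [NumberField F]
    (v : HeightOneSpectrum (𝓞 F)) (h2 : v.asIdeal = Ideal.span {(2 : 𝓞 F)})
    (lam mu : F) (hint : ∃ a : 𝓞 F, algebraMap (𝓞 F) F a = lam)
    (hsum : lam + mu = 1)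
    (hlamS : ∀ w : HeightOneSpectrum (𝓞 F), w ≠ v → w.valuation F lam = 1)
    (hmuS : ∀ w : HeightOneSpectrum (𝓞 F), w ≠ v → w.valuation F mu = 1)
    (n : ℕ) (hn : 2 ≤ n) (hlamn : ordAt v lam = n) (hmu0 : ordAt v mu = 0)
    (δ : (𝓞 F)ˣ) (hδ : mu = algebraMap (𝓞 F) F (δ : 𝓞 F) ^ 2) :
    (1 + algebraMap (𝓞 F) F (δ : 𝓞 F)) * (1 - algebraMap (𝓞 F) F (δ : 𝓞 F)) = lam ∧
    (1 + algebraMap (𝓞 F) F (δ : 𝓞 F)) + (1 - algebraMap (𝓞 F) F (δ : 𝓞 F)) = 2 ∧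
    (1 + algebraMap (𝓞 F) F (δ : 𝓞 F)) - (1 - algebraMap (𝓞 F) F (δ : 𝓞 F)) =
      2 * algebraMap (𝓞 F) F (δ : 𝓞 F) ∧
    (∀ w : HeightOneSpectrum (𝓞 F), w ≠ v →
      w.valuation F (1 + algebraMap (𝓞 F) F (δ : 𝓞 F)) = 1 ∧
      w.valuation F (1 - algebraMap (𝓞 F) F (δ : 𝓞 F)) = 1) ∧
    0 ≤ ordAt v (1 + algebraMap (𝓞 F) F (δ : 𝓞 F)) ∧
    0 ≤ ordAt v (1 - algebraMap (𝓞 F) F (δ : 𝓞 F)) ∧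
    ((ordAt v (1 + algebraMap (𝓞 F) F (δ : 𝓞 F)) = 1 ∧
        ordAt v (1 - algebraMap (𝓞 F) F (δ : 𝓞 F)) = (n : ℤ) - 1) ∨
      (ordAt v (1 + algebraMap (𝓞 F) F (δ : 𝓞 F)) = (n : ℤ) - 1 ∧
        ordAt v (1 - algebraMap (𝓞 F) F (δ : 𝓞 F)) = 1)) := by
  set d := algebraMap (𝓞 F) F (δ : 𝓞 F) with hd
  have hfac : (1 + d) * (1 - d) = lam := by
    have hl : lam = 1 - mu := by rw [← hsum]; ring
    rw [hl, hδ]; ring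
  have h2' : (1 + d) + (1 - d) = 2 := by ring
  have h3' : (1 + d) - (1 - d) = 2 * d := by ring
  have hvlam : v.valuation F lam ≠ 0 := by
    intro h
    rw [ordAt, dif_pos h] at hlamn
    omega
  have hlam0 : lam ≠ 0 := fun h => hvlam (by rw [h, map_zero])
  have h1p : (1 + d) ≠ 0 := fun h => hlam0 (by rw [← hfac, h, zero_mul])
  have h1m : (1 - d) ≠ 0 := fun h => hlam0 (by rw [← hfac, h, mul_zero])
  have hint1 : ∀ w : HeightOneSpectrum (𝓞 F), w.valuation F (1 + d) ≤ 1 := fun w => by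
    have := w.valuation_le_one (K := F) (1 + (δ : 𝓞 F))
    change w.valuation F (algebraMap (𝓞 F) F (1 + (δ : 𝓞 F))) ≤ 1 at this
    rwa [map_add, map_one] at this
  have hint2 : ∀ w : HeightOneSpectrum (𝓞 F), w.valuation F (1 - d) ≤ 1 := fun w => by
    have := w.valuation_le_one (K := F) (1 - (δ : 𝓞 F))
    change w.valuation F (algebraMap (𝓞 F) F (1 - (δ : 𝓞 F))) ≤ 1 at this
    rwa [map_sub, map_one] at this
  have hS : ∀ w : HeightOneSpectrum (𝓞 F), w ≠ v →
      w.valuation F (1 + d) = 1 ∧ w.valuation F (1 - d) = 1 := by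
    intro w hw
    have hprod : w.valuation F (1 + d) * w.valuation F (1 - d) = 1 := by
      rw [← map_mul, hfac, hlamS w hw]
    constructor
    · refine le_antisymm (hint1 w) ?_
      calc (1 : WithZero (Multiplicative ℤ)) = w.valuation F (1+d) * w.valuation F (1-d) :=
            hprod.symm
        _ ≤ w.valuation F (1+d) * 1 := mul_le_mul_right (hint2 w) _
        _ = w.valuation F (1+d) := mul_one _
    · refine le_antisymm (hint2 w) ?_
      calc (1 : WithZero (Multiplicative ℤ)) = w.valuation F (1+d) * w.valuation F (1-d) :=
            hprod.symm
        _ ≤ 1 * w.valuation F (1-d) := mul_le_mul_left (hint1 w) _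
        _ = w.valuation F (1-d) := one_mul _
  have hv1 : v.valuation F (1 + d) ≠ 0 := fun h => h1p ((v.valuation F).zero_iff.mp h)
  have hv2 : v.valuation F (1 - d) ≠ 0 := fun h => h1m ((v.valuation F).zero_iff.mp h)
  set a := ordAt v (1 + d) with ha
  set b := ordAt v (1 - d) with hb
  have hva := ordAt_spec v hv1
  have hvb := ordAt_spec v hv2
  have hvlam' := ordAt_spec v hvlam
  rw [hlamn] at hvlam'
  have hab : a + b = (n : ℤ) := by
    have hm : v.valuation F (1+d) * v.valuation F (1-d) = v.valuation F lam := by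
      rw [← map_mul, hfac]
    rw [hva, hvb, hvlam', ← WithZero.coe_mul, ← ofAdd_add, WithZero.coe_inj] at hm
    have := Multiplicative.ofAdd.injective hm
    omega
  have ha0 : 0 ≤ a := by
    have h := hint1 v
    rw [hva, ← WithZero.coe_one, WithZero.coe_le_coe, ← ofAdd_zero,
      Multiplicative.ofAdd_le] at h
    omega
  have hb0 : 0 ≤ b := by
    have h := hint2 v
    rw [hvb, ← WithZero.coe_one, WithZero.coe_le_coe, ← ofAdd_zero,
      Multiplicative.ofAdd_le] at h
    omega
  have h2v : v.valuation F (2 : F) = ((Multiplicative.ofAdd (-1 : ℤ) : Multiplicative ℤ) :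
      WithZero (Multiplicative ℤ)) := by
    have h2F : (2 : F) = algebraMap (𝓞 F) F 2 := by rw [map_ofNat]
    rw [h2F, v.valuation_of_algebraMap, v.intValuation_singleton two_ne_zero h2]
    rfl
  have hmin : min a b ≤ 1 := by
    have hmax : v.valuation F ((1+d) + (1-d)) ≤
        max (v.valuation F (1+d)) (v.valuation F (1-d)) := (v.valuation F).map_add _ _
    rw [h2', h2v, hva, hvb] at hmax
    rcases le_max_iff.mp hmax with h | h <;>
      · rw [WithZero.coe_le_coe, Multiplicative.ofAdd_le] at h; omega
  refine ⟨hfac, h2', h3', hS, ha0, hb0, ?_⟩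
  rcases eq_or_ne a b with heq | hne
  · left; constructor <;> omega
  · have hdv : v.valuation F (1+d) ≠ v.valuation F (1-d) := by
      rw [hva, hvb]
      intro hc
      rw [WithZero.coe_inj] at hc
      exact hne (by have := Multiplicative.ofAdd.injective hc; omega)
    have hmx := Valuation.map_add_of_distinct_val (v.valuation F) hdv
    rw [h2', h2v, hva, hvb] at hmx
    rcases le_or_gt a b with h | h
    · have hle : ((Multiplicative.ofAdd (-ordAt v (1 - d)) : Multiplicative ℤ) :
          WithZero (Multiplicative ℤ)) ≤
          ((Multiplicative.ofAdd (-ordAt v (1 + d)) : Multiplicative ℤ) :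
          WithZero (Multiplicative ℤ)) := by
        rw [WithZero.coe_le_coe, Multiplicative.ofAdd_le]
        show -b ≤ -a
        omega
      rw [max_eq_left hle, WithZero.coe_inj] at hmx
      have := Multiplicative.ofAdd.injective hmx
      left; constructor <;> omega
    · have hle : ((Multiplicative.ofAdd (-ordAt v (1 + d)) : Multiplicative ℤ) :
          WithZero (Multiplicative ℤ)) ≤
          ((Multiplicative.ofAdd (-ordAt v (1 - d)) : Multiplicative ℤ) :
          WithZero (Multiplicative ℤ)) := by
        rw [WithZero.coe_le_coe, Multiplicative.ofAdd_le]
        show -a ≤ -b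
        omega
      rw [max_eq_right hle, WithZero.coe_inj] at hmx
      have := Multiplicative.ofAdd.injective hmx
      right; constructor <;> omega
end

section
/- Let F be a number field with class number h_F, and K/F a cyclic extension such that the index [O_F^× : O_F^× ∩ N_{K/F}(K^×)] divides h_F. Let p be a prime totally ramified in K with 𝔭 the unique prime of F above p, and suppose [K:F] = (p-1)/2. Then every unit λ ∈ O_F^× satisfies λ^{2h_F} ≡ 1 (mod 𝔭). -/
open NumberField

set_option maxHeartbeats 1000000
set_option synthInstance.maxHeartbeats 400000

/-- Key local lemma: if `x ∈ K^×` has norm a unit `ε` of `𝓞 F`, with `p` totally ramified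
in `K` etc., then `ε² ≡ 1 (mod 𝔭)`. -/
theorem aux_norm_unit_sq (F K : Type*) [Field F] [NumberField F]
    [Field K] [NumberField K] [Algebra F K] [IsGalois F K]
    (p : ℕ) (hp : p.Prime) (hdeg : Module.finrank F K = (p - 1) / 2)
    (𝔓 : Ideal (𝓞 K)) (h𝔓 : 𝔓.IsMaximal)
    (hsp : Ideal.span {(p : 𝓞 K)} = 𝔓 ^ Module.finrank ℚ K)
    (𝔭 : Ideal (𝓞 F)) (h𝔭 : 𝔭.IsMaximal) (hp𝔭 : (p : 𝓞 F) ∈ 𝔭)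
    (ε : (𝓞 F)ˣ) (x : Kˣ) (hx : Algebra.norm F (x : K) = algebraMap (𝓞 F) F (ε : 𝓞 F)) :
    ((ε : 𝓞 F)) ^ 2 - 1 ∈ 𝔭 := by
  classical
  have hn0 : Module.finrank ℚ K ≠ 0 := Module.finrank_pos.ne'
  -- p ∈ 𝔓
  have hp𝔓 : (p : 𝓞 K) ∈ 𝔓 := by
    have h1 : (p : 𝓞 K) ∈ 𝔓 ^ Module.finrank ℚ K := by
      rw [← hsp]; exact Ideal.mem_span_singleton_self _
    exact Ideal.pow_le_self hn0 h1
  -- uniqueness of the prime over p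
  have huniq : ∀ Q : Ideal (𝓞 K), Q.IsPrime → (p : 𝓞 K) ∈ Q → Q = 𝔓 := by
    intro Q hQ hpQ
    have h1 : 𝔓 ^ Module.finrank ℚ K ≤ Q := by
      rw [← hsp]
      exact (Ideal.span_singleton_le_iff_mem Q).mpr hpQ
    have h2 : 𝔓 ≤ Q := hQ.le_of_pow_le h1
    exact (h𝔓.eq_of_le hQ.ne_top h2).symm
  -- injectivity of 𝓞 F → 𝓞 K
  have hinj : Function.Injective (algebraMap (𝓞 F) (𝓞 K)) := by
    intro a b h
    have h2 : algebraMap F K (algebraMap (𝓞 F) F a) = algebraMap F K (algebraMap (𝓞 F) F b) :=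
      congrArg (algebraMap (𝓞 K) K) h
    exact RingOfIntegers.coe_injective ((algebraMap F K).injective h2)
  -- 𝔭 is the comap of 𝔓
  have h𝔭eq : 𝔭 = Ideal.comap (algebraMap (𝓞 F) (𝓞 K)) 𝔓 := by
    obtain ⟨Q, hQmax, hQcomap⟩ := Ideal.exists_ideal_over_maximal_of_isIntegral 𝔭
      (by rw [(RingHom.injective_iff_ker_eq_bot _).mp hinj]; exact bot_le)
    have hpQ : (p : 𝓞 K) ∈ Q := by
      have : algebraMap (𝓞 F) (𝓞 K) (p : 𝓞 F) ∈ Q := by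
        rw [← hQcomap] at hp𝔭; exact hp𝔭
      rwa [map_natCast] at this
    rw [← hQcomap, huniq Q hQmax.isPrime hpQ]
  -- the residue field k and its cardinality
  have habs : Ideal.absNorm 𝔓 = p := by
    have h1 : Ideal.absNorm (Ideal.span {(p : 𝓞 K)}) = p ^ Module.finrank ℚ K := by
      rw [Ideal.absNorm_span_singleton]
      have h2 : (p : 𝓞 K) = algebraMap ℤ (𝓞 K) (p : ℤ) := by simp
      rw [h2, Algebra.norm_algebraMap_of_basis (Module.Free.chooseBasis ℤ (𝓞 K)),
        ← Module.finrank_eq_card_chooseBasisIndex, RingOfIntegers.rank]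
      simp [Int.natAbs_pow]
    rw [hsp, map_pow] at h1
    exact Nat.pow_left_injective hn0 h1
  have hcard : Nat.card (𝓞 K ⧸ 𝔓) = p := by
    rw [← habs, Ideal.absNorm_apply, Submodule.cardQuot_apply]
  have : Finite (𝓞 K ⧸ 𝔓) := Nat.finite_of_card_ne_zero (by rw [hcard]; exact hp.pos.ne')
  have : Fintype (𝓞 K ⧸ 𝔓) := Fintype.ofFinite _
  have hcard' : Fintype.card (𝓞 K ⧸ 𝔓) = p := by rw [← Nat.card_eq_fintype_card, hcard]
  letI : Field (𝓞 K ⧸ 𝔓) := Ideal.Quotient.field 𝔓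
  let e : ZMod p ≃+* (𝓞 K ⧸ 𝔓) := ZMod.ringEquivOfPrime _ hp hcard'
  have hm0 : Module.finrank F K ≠ 0 := Module.finrank_pos.ne'
  -- every ring endomorphism of the residue field is the identity
  have hendo : ∀ φ : (𝓞 K ⧸ 𝔓) →+* (𝓞 K ⧸ 𝔓), ∀ z, φ z = z := by
    intro φ z
    obtain ⟨w, rfl⟩ := e.surjective z
    exact RingHom.congr_fun (RingHom.ext_zmod (φ.comp e.toRingHom) e.toRingHom) w
  -- Galois action fixes the residue field
  have hfix : ∀ (σ : K ≃ₐ[F] K) (y : 𝓞 K),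
      Ideal.Quotient.mk 𝔓 (RingOfIntegers.mapRingHom σ y) = Ideal.Quotient.mk 𝔓 y := by
    intro σ y
    have hQ : Ideal.comap (RingOfIntegers.mapRingHom σ) 𝔓 = 𝔓 := by
      apply huniq
      · exact Ideal.IsPrime.comap _
      · show (RingOfIntegers.mapRingHom σ) (p : 𝓞 K) ∈ 𝔓
        rw [map_natCast]; exact hp𝔓
    have hker : ∀ z ∈ 𝔓, ((Ideal.Quotient.mk 𝔓).comp (RingOfIntegers.mapRingHom σ)) z = 0 := by
      intro z hz
      have : (RingOfIntegers.mapRingHom σ) z ∈ 𝔓 := by rw [← hQ] at hz; exact hz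
      simpa using Ideal.Quotient.eq_zero_iff_mem.mpr this
    have := hendo (Ideal.Quotient.lift 𝔓 ((Ideal.Quotient.mk 𝔓).comp
      (RingOfIntegers.mapRingHom σ)) hker) (Ideal.Quotient.mk 𝔓 y)
    rwa [Ideal.Quotient.lift_mk] at this
  -- 2 * finrank F K = p - 1
  have hp2 : p ≠ 2 := by
    intro h
    rw [h] at hdeg
    norm_num at hdeg
    exact Module.finrank_pos.ne' hdeg
  have hdeg2 : 2 * Module.finrank F K = p - 1 := by
    rw [hdeg]
    exact Nat.two_mul_div_two_of_even (Nat.Odd.sub_odd (hp.odd_of_ne_two hp2) odd_one)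
  -- Claim B: the integral case
  have claimB : ∀ (x : K) (ε : (𝓞 F)ˣ), Algebra.norm F x = algebraMap (𝓞 F) F (ε : 𝓞 F) →
      (∃ a s : 𝓞 K, s ∉ 𝔓 ∧ x * algebraMap (𝓞 K) K s = algebraMap (𝓞 K) K a) →
      (Ideal.Quotient.mk 𝔓 (algebraMap (𝓞 F) (𝓞 K) (ε : 𝓞 F))) ^ 2 = 1 := by
    rintro x ε hx ⟨a, s, hs, heq⟩
    -- norm of the equation
    have hnorm : Algebra.norm F (algebraMap (𝓞 K) K a)
        = algebraMap (𝓞 F) F (ε : 𝓞 F) * Algebra.norm F (algebraMap (𝓞 K) K s) := by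
      rw [← heq, map_mul, hx]
    -- push to K and realize in 𝓞 K
    have hK : algebraMap (𝓞 K) K (∏ σ : K ≃ₐ[F] K, RingOfIntegers.mapRingHom σ a)
        = algebraMap (𝓞 K) K ((algebraMap (𝓞 F) (𝓞 K) (ε : 𝓞 F))
            * ∏ σ : K ≃ₐ[F] K, RingOfIntegers.mapRingHom σ s) := by
      rw [map_prod, map_mul, map_prod]
      have h1 : ∀ σ : K ≃ₐ[F] K, algebraMap (𝓞 K) K (RingOfIntegers.mapRingHom σ a)
          = σ (algebraMap (𝓞 K) K a) := fun σ => rfl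
      have h2 : ∀ σ : K ≃ₐ[F] K, algebraMap (𝓞 K) K (RingOfIntegers.mapRingHom σ s)
          = σ (algebraMap (𝓞 K) K s) := fun σ => rfl
      simp_rw [h1, h2]
      rw [← Algebra.norm_eq_prod_automorphisms, ← Algebra.norm_eq_prod_automorphisms, hnorm,
        map_mul]
      congr 1
    have hO : (∏ σ : K ≃ₐ[F] K, RingOfIntegers.mapRingHom σ a)
        = (algebraMap (𝓞 F) (𝓞 K) (ε : 𝓞 F)) * ∏ σ : K ≃ₐ[F] K, RingOfIntegers.mapRingHom σ s :=
      RingOfIntegers.coe_injective hK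
    -- pass to the residue field
    have hq := congrArg (Ideal.Quotient.mk 𝔓) hO
    rw [map_mul, map_prod, map_prod] at hq
    simp_rw [hfix] at hq
    rw [Finset.prod_const, Finset.prod_const, Finset.card_univ, ← Nat.card_eq_fintype_card,
      IsGalois.card_aut_eq_finrank]
      at hq
    -- nonvanishing
    have hsne : Ideal.Quotient.mk 𝔓 s ≠ 0 := fun h => hs (Ideal.Quotient.eq_zero_iff_mem.mp h)
    have hεunit : IsUnit (Ideal.Quotient.mk 𝔓 (algebraMap (𝓞 F) (𝓞 K) (ε : 𝓞 F))) :=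
      (ε.map ((Ideal.Quotient.mk 𝔓).comp (algebraMap (𝓞 F) (𝓞 K))).toMonoidHom).isUnit
    have hane : Ideal.Quotient.mk 𝔓 a ≠ 0 := by
      intro h
      rw [h, zero_pow hm0] at hq
      exact hεunit.ne_zero (by
        have := mul_eq_zero.mp hq.symm
        rcases this with h' | h'
        · exact h'
        · exact absurd h' (pow_ne_zero _ hsne))
    -- finish in the field 𝓞 K ⧸ 𝔓
    have hfield : ∀ c : 𝓞 K ⧸ 𝔓, c ≠ 0 → c ^ (p - 1) = 1 := by
      intro c hc
      have h2 := pow_card_eq_one' (x := hc.isUnit.unit)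
      rw [Nat.card_units, hcard] at h2
      calc c ^ (p - 1) = ((hc.isUnit.unit ^ (p - 1) : (𝓞 K ⧸ 𝔓)ˣ) : 𝓞 K ⧸ 𝔓) := by
            rw [Units.val_pow_eq_pow_val, IsUnit.unit_spec]
        _ = 1 := by rw [h2, Units.val_one]
    set m := Module.finrank F K
    set qa := Ideal.Quotient.mk 𝔓 a
    set qs := Ideal.Quotient.mk 𝔓 s
    set qe := Ideal.Quotient.mk 𝔓 (algebraMap (𝓞 F) (𝓞 K) (ε : 𝓞 F))
    have hqe : qe = (qa * qs⁻¹) ^ m := by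
      rw [mul_pow, hq]
      rw [mul_assoc, ← mul_pow, mul_inv_cancel₀ hsne, one_pow, mul_one]
    have hcne : qa * qs⁻¹ ≠ 0 := mul_ne_zero hane (inv_ne_zero hsne)
    have hfin : (qa * qs⁻¹) ^ (2 * m) = 1 := by rw [hdeg2]; exact hfield _ hcne
    calc qe ^ 2 = ((qa * qs⁻¹) ^ m) ^ 2 := by rw [hqe]
      _ = (qa * qs⁻¹) ^ (2 * m) := by rw [← pow_mul, Nat.mul_comm m 2]
      _ = 1 := hfin
  -- the valuation ring dichotomy
  have hle : 𝔓.primeCompl ≤ nonZeroDivisors (𝓞 K) := 𝔓.primeCompl_le_nonZeroDivisors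
  let R := Localization.subalgebra.ofField K 𝔓.primeCompl hle
  have h𝔓bot : 𝔓 ≠ ⊥ := by
    intro h
    rw [h, Ideal.mem_bot] at hp𝔓
    exact hp.ne_zero (by exact_mod_cast hp𝔓)
  haveI : IsDiscreteValuationRing R :=
    IsLocalization.AtPrime.isDiscreteValuationRing_of_dedekind_domain (𝓞 K) h𝔓bot R
  have hrep : ∀ y : K, IsLocalization.IsInteger R y →
      ∃ a s : 𝓞 K, s ∉ 𝔓 ∧ y * algebraMap (𝓞 K) K s = algebraMap (𝓞 K) K a := by
    rintro y ⟨r, hr⟩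
    obtain ⟨a, s, hs, hr2⟩ := r.2
    refine ⟨a, s, hs, ?_⟩
    have hy : y = algebraMap (𝓞 K) K a * (algebraMap (𝓞 K) K s)⁻¹ := by
      rw [← hr]; exact hr2
    have hs0 : algebraMap (𝓞 K) K s ≠ 0 := by
      rw [RingOfIntegers.coe_ne_zero_iff]
      intro h
      exact hs (h ▸ 𝔓.zero_mem)
    rw [hy]
    field_simp
  -- main dichotomy
  have hmain : (Ideal.Quotient.mk 𝔓 (algebraMap (𝓞 F) (𝓞 K) (ε : 𝓞 F))) ^ 2 = 1 := by
    rcases ValuationRing.isInteger_or_isInteger R ((x : K)) with h | h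
    · exact claimB (x : K) ε hx (hrep _ h)
    · have hx' : Algebra.norm F ((x : K)⁻¹) = algebraMap (𝓞 F) F ((ε⁻¹ : (𝓞 F)ˣ) : 𝓞 F) := by
        have h1 : Algebra.norm F ((x : K)⁻¹) * Algebra.norm F (x : K) = 1 := by
          rw [← map_mul, inv_mul_cancel₀ x.ne_zero, map_one]
        have h2 : algebraMap (𝓞 F) F ((ε⁻¹ : (𝓞 F)ˣ) : 𝓞 F) * algebraMap (𝓞 F) F (ε : 𝓞 F) = 1 := by
          rw [← map_mul, ← Units.val_mul, inv_mul_cancel, Units.val_one, map_one]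
        calc Algebra.norm F ((x : K)⁻¹) = (Algebra.norm F (x : K))⁻¹ :=
              eq_inv_of_mul_eq_one_left h1
          _ = (algebraMap (𝓞 F) F (ε : 𝓞 F))⁻¹ := by rw [hx]
          _ = algebraMap (𝓞 F) F ((ε⁻¹ : (𝓞 F)ˣ) : 𝓞 F) := (eq_inv_of_mul_eq_one_left h2).symm
      have := claimB ((x : K)⁻¹) ε⁻¹ hx' (hrep _ h)
      have hcompl : (Ideal.Quotient.mk 𝔓 (algebraMap (𝓞 F) (𝓞 K) (ε : 𝓞 F)))
          * (Ideal.Quotient.mk 𝔓 (algebraMap (𝓞 F) (𝓞 K) ((ε⁻¹ : (𝓞 F)ˣ) : 𝓞 F))) = 1 := by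
        rw [← map_mul, ← map_mul, ← Units.val_mul, mul_inv_cancel, Units.val_one, map_one,
          map_one]
      calc (Ideal.Quotient.mk 𝔓 (algebraMap (𝓞 F) (𝓞 K) (ε : 𝓞 F))) ^ 2
          = (Ideal.Quotient.mk 𝔓 (algebraMap (𝓞 F) (𝓞 K) (ε : 𝓞 F))) ^ 2
            * ((Ideal.Quotient.mk 𝔓 (algebraMap (𝓞 F) (𝓞 K) ((ε⁻¹ : (𝓞 F)ˣ) : 𝓞 F))) ^ 2) := by
            rw [this, mul_one]
        _ = ((Ideal.Quotient.mk 𝔓 (algebraMap (𝓞 F) (𝓞 K) (ε : 𝓞 F)))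
            * (Ideal.Quotient.mk 𝔓 (algebraMap (𝓞 F) (𝓞 K) ((ε⁻¹ : (𝓞 F)ˣ) : 𝓞 F)))) ^ 2 := by
            ring
        _ = 1 := by rw [hcompl, one_pow]
  -- conclude
  have hmem : algebraMap (𝓞 F) (𝓞 K) ((ε : 𝓞 F) ^ 2 - 1) ∈ 𝔓 := by
    rw [← Ideal.Quotient.eq_zero_iff_mem]
    simp only [map_sub, map_pow, map_one]
    rw [hmain, sub_self]
  rw [h𝔭eq]
  exact hmem

/-- Let `F` be a number field with class number `h_F`, and `K/F` a cyclic extension such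
that the index `[O_F^× : O_F^× ∩ N_{K/F}(K^×)]` divides `h_F`. Let `p` be a prime totally
ramified in `K` (so `p·O_K = 𝔓^[K:ℚ]`) with `𝔭` the unique prime of `F` above `p`, and
suppose `[K:F] = (p-1)/2`. Then every unit `λ ∈ O_F^×` satisfies `λ^(2h_F) ≡ 1 (mod 𝔭)`. -/
theorem unit_pow_two_mul_classNumber_congruent_one (F K : Type*) [Field F] [NumberField F]
    [Field K] [NumberField K] [Algebra F K] [IsGalois F K] [IsCyclic (K ≃ₐ[F] K)]
    (hidx : (Subgroup.comap (Units.map (algebraMap (𝓞 F) F).toMonoidHom)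
      (Units.map (Algebra.norm F : K →* F)).range).index ∣ classNumber F)
    (p : ℕ) (hp : p.Prime) (hdeg : Module.finrank F K = (p - 1) / 2)
    (htot : ∃ 𝔓 : Ideal (𝓞 K), 𝔓.IsMaximal ∧
      Ideal.span {(p : 𝓞 K)} = 𝔓 ^ Module.finrank ℚ K)
    (𝔭 : Ideal (𝓞 F)) (h𝔭 : 𝔭.IsMaximal) (hp𝔭 : (p : 𝓞 F) ∈ 𝔭) :
    ∀ lam : (𝓞 F)ˣ, (lam : 𝓞 F) ^ (2 * classNumber F) - 1 ∈ 𝔭 := by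
  intro lam
  obtain ⟨𝔓, h𝔓, hsp⟩ := htot
  obtain ⟨m, hm⟩ := hidx
  have hmem : lam ^ classNumber F ∈ Subgroup.comap
      (Units.map (algebraMap (𝓞 F) F).toMonoidHom)
      (Units.map (Algebra.norm F : K →* F)).range := by
    rw [hm, pow_mul]
    exact Subgroup.pow_mem _ (Subgroup.pow_index_mem _ lam) m
  rw [Subgroup.mem_comap] at hmem
  obtain ⟨u, hu⟩ := hmem
  have hu' : Algebra.norm F (u : K)
      = algebraMap (𝓞 F) F ((lam ^ classNumber F : (𝓞 F)ˣ) : 𝓞 F) := by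
    have := congrArg (Units.val) hu
    simpa using this
  have hfin := aux_norm_unit_sq F K p hp hdeg 𝔓 h𝔓 hsp 𝔭 h𝔭 hp𝔭 (lam ^ classNumber F) u hu'
  have heq : (((lam ^ classNumber F : (𝓞 F)ˣ) : 𝓞 F)) ^ 2
      = (lam : 𝓞 F) ^ (2 * classNumber F) := by
    rw [Units.val_pow_eq_pow_val, ← pow_mul, Nat.mul_comm]
  rwa [heq] at hfin
end
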